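/- Let X_p be a critical point of f (so every principal angle θ_i to col(U) is 0 or π/2), not equal to [U] (so some θ_i = π/2). Then the direction Δ_crit = U_p sin(Θ) is tangent at X_p and satisfies hess f(X_p)[Δ_crit, Δ_crit] = −Tr[sin²(Θ) Ξ] < 0. Hence every critical point of f other than [U] is a strict saddle. -/
import Mathlib


open Matrix Real

/-- at a critical point `Xp` (all principal angles `0` or `π/2`) other
than `[U]` (some angle is `π/2`), the direction `Δcrit = Up sin(Θ)` is tangent at `Xp`
and the Hessian quadratic form
`−2⟨Δ Δᵀ M, (I − Xp Xpᵀ)M⟩ + ‖(Δ Xpᵀ + Xp Δᵀ)M‖_F²` on it equals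
`−Tr[sin²(Θ) Ξ] < 0`: every such critical point is a strict saddle. -/
theorem strict_saddle_at_critical {m n r : ℕ}
    (U : Matrix (Fin m) (Fin r) ℝ) (V : Matrix (Fin n) (Fin r) ℝ) (σ : Fin r → ℝ)
    (hU : Uᵀ * U = 1) (hV : Vᵀ * V = 1)
    (σmin : ℝ) (hσmin : 0 < σmin) (hσ : ∀ i, σmin ≤ σ i)
    (M : Matrix (Fin m) (Fin n) ℝ) (hM : M = U * Matrix.diagonal σ * Vᵀ)
    (Q : Matrix (Fin r) (Fin r) ℝ) (hQ : Qᵀ * Q = 1)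
    (Xp : Matrix (Fin m) (Fin r) ℝ) (hXp : Xpᵀ * Xp = 1)
    (θ : Fin r → ℝ) (hθ : ∀ i, θ i = 0 ∨ θ i = π / 2)
    (hcos : Xpᵀ * (U * Q) = Matrix.diagonal (fun i => Real.cos (θ i)))
    (Ξ : Matrix (Fin r) (Fin r) ℝ)
    (hΞ : Ξ = Qᵀ * (Matrix.diagonal σ * Matrix.diagonal σ) * Q)
    (i0 : Fin r) (hi0 : θ i0 = π / 2)
    (Δcrit : Matrix (Fin m) (Fin r) ℝ)
    (hΔcrit : Δcrit = U * Q * Matrix.diagonal (fun i => Real.sin (θ i))) :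
    Xpᵀ * Δcrit = 0 ∧
    ((-2) * Matrix.trace
        ((Δcrit * Δcritᵀ * M)ᵀ * (((1 : Matrix (Fin m) (Fin m) ℝ) - Xp * Xpᵀ) * M)) +
      Matrix.trace (((Δcrit * Xpᵀ + Xp * Δcritᵀ) * M)ᵀ *
        ((Δcrit * Xpᵀ + Xp * Δcritᵀ) * M))
      = -Matrix.trace (Matrix.diagonal (fun i => Real.sin (θ i) ^ 2) * Ξ)) ∧
    ((-2) * Matrix.trace
        ((Δcrit * Δcritᵀ * M)ᵀ * (((1 : Matrix (Fin m) (Fin m) ℝ) - Xp * Xpᵀ) * M)) +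
      Matrix.trace (((Δcrit * Xpᵀ + Xp * Δcritᵀ) * M)ᵀ *
        ((Δcrit * Xpᵀ + Xp * Δcritᵀ) * M))
      < 0) := by
  classical
  have key : ∀ {a b c d : ℕ} (A : Matrix (Fin a) (Fin b) ℝ) (B : Matrix (Fin b) (Fin c) ℝ)
      (E : Matrix (Fin a) (Fin c) ℝ) (Z : Matrix (Fin c) (Fin d) ℝ),
      A * B = E → A * (B * Z) = E * Z := by
    intro a b c d A B E Z h; rw [← Matrix.mul_assoc, h]
  set D := Matrix.diagonal σ with hD
  set C := Matrix.diagonal (fun i => Real.cos (θ i)) with hCdef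
  set S := Matrix.diagonal (fun i => Real.sin (θ i)) with hSdef
  have hSt : Sᵀ = S := by rw [hSdef]; exact Matrix.diagonal_transpose _
  have hCt : Cᵀ = C := by rw [hCdef]; exact Matrix.diagonal_transpose _
  have hDt : Dᵀ = D := by rw [hD]; exact Matrix.diagonal_transpose _
  have hQQ : Q * Qᵀ = 1 := by rw [mul_eq_one_comm]; exact hQ
  have hCS : C * S = 0 := by
    rw [hCdef, hSdef, Matrix.diagonal_mul_diagonal]
    have h0 : (fun i => Real.cos (θ i) * Real.sin (θ i)) = fun _ => (0:ℝ) := by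
      funext i; rcases hθ i with h | h <;> simp [h]
    rw [h0]; exact Matrix.diagonal_zero
  have hSC : S * C = 0 := by
    rw [hSdef, hCdef, Matrix.diagonal_mul_diagonal]
    have h0 : (fun i => Real.sin (θ i) * Real.cos (θ i)) = fun _ => (0:ℝ) := by
      funext i; rcases hθ i with h | h <;> simp [h]
    rw [h0]; exact Matrix.diagonal_zero
  -- Xpᵀ U = C Qᵀ and Uᵀ Xp = Q C
  have hXU : Xpᵀ * U = C * Qᵀ := by
    calc Xpᵀ * U = Xpᵀ * (U * (Q * Qᵀ)) := by rw [hQQ, Matrix.mul_one]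
    _ = Xpᵀ * (U * Q) * Qᵀ := by rw [← Matrix.mul_assoc U Q Qᵀ, ← Matrix.mul_assoc]
    _ = C * Qᵀ := by rw [hcos]
  have hUX : Uᵀ * Xp = Q * C := by
    have := congrArg Matrix.transpose hXU
    simpa [Matrix.transpose_mul, hCt] using this
  -- Part 1: tangency
  have htangent : Xpᵀ * Δcrit = 0 := by
    rw [hΔcrit, ← Matrix.mul_assoc, hcos, hCS]
  have hΔX : Δcritᵀ * Xp = 0 := by
    have := congrArg Matrix.transpose htangent
    simpa [Matrix.transpose_mul] using this
  -- products with M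
  have hΔtM : Δcritᵀ * M = S * (Qᵀ * (D * Vᵀ)) := by
    rw [hΔcrit, hM]
    simp only [Matrix.transpose_mul, hSt, Matrix.mul_assoc]
    rw [key _ _ _ _ hU, Matrix.one_mul]
  have hMtΔ : Mᵀ * Δcrit = V * (D * (Q * S)) := by
    have := congrArg Matrix.transpose hΔtM
    simpa [Matrix.transpose_mul, hSt, hDt, Matrix.mul_assoc] using this
  have hXtM : Xpᵀ * M = C * (Qᵀ * (D * Vᵀ)) := by
    rw [hM]
    simp only [Matrix.mul_assoc]
    rw [key _ _ _ _ hXU, Matrix.mul_assoc]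
  have hΔtΔ : Δcritᵀ * Δcrit = S * S := by
    rw [hΔcrit]
    simp only [Matrix.transpose_mul, hSt, Matrix.mul_assoc]
    rw [key _ _ _ _ hU, Matrix.one_mul, key _ _ _ _ hQ, Matrix.one_mul]
  -- the central matrix: Mᵀ Δ Δᵀ M = V K Vᵀ
  set K : Matrix (Fin r) (Fin r) ℝ := D * (Q * (S * (S * (Qᵀ * D)))) with hK
  have hcenter : Mᵀ * (Δcrit * (Δcritᵀ * M)) = V * (K * Vᵀ) := by
    rw [hΔtM, key _ _ _ _ hMtΔ]
    simp only [Matrix.mul_assoc, hK]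
  have htraceK : Matrix.trace (Mᵀ * (Δcrit * (Δcritᵀ * M)))
      = Matrix.trace (Matrix.diagonal (fun i => Real.sin (θ i) ^ 2) * Ξ) := by
    rw [hcenter, Matrix.trace_mul_comm, Matrix.mul_assoc, hV, Matrix.mul_one]
    rw [hK, hΞ]
    have hdiag : Matrix.diagonal (fun i => Real.sin (θ i) ^ 2) = S * S := by
      rw [hSdef, Matrix.diagonal_mul_diagonal]
      exact congrArg Matrix.diagonal (funext fun i => pow_two (Real.sin (θ i)))
    rw [hdiag]
    -- trace (D * (Q * (S * (S * (Qᵀ * D))))) = trace (S * S * (Qᵀ * (D * D) * Q))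
    rw [show D * (Q * (S * (S * (Qᵀ * D)))) = (D * Q) * (S * (S * (Qᵀ * D))) by
      simp only [Matrix.mul_assoc]]
    rw [Matrix.trace_mul_comm]
    simp only [Matrix.mul_assoc]
  -- first big trace
  have hfirst : Matrix.trace
      ((Δcrit * Δcritᵀ * M)ᵀ * (((1 : Matrix (Fin m) (Fin m) ℝ) - Xp * Xpᵀ) * M))
      = Matrix.trace (Matrix.diagonal (fun i => Real.sin (θ i) ^ 2) * Ξ) := by
    have hA1 : (Δcrit * Δcritᵀ * M)ᵀ = Mᵀ * (Δcrit * Δcritᵀ) := by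
      simp [Matrix.transpose_mul, Matrix.mul_assoc]
    have hexp : ((1 : Matrix (Fin m) (Fin m) ℝ) - Xp * Xpᵀ) * M
        = M - Xp * (Xpᵀ * M) := by
      rw [Matrix.sub_mul, Matrix.one_mul, Matrix.mul_assoc]
    rw [hA1, hexp, Matrix.mul_sub, Matrix.trace_sub]
    have h2 : Mᵀ * (Δcrit * Δcritᵀ) * (Xp * (Xpᵀ * M)) = 0 := by
      simp only [Matrix.mul_assoc]
      rw [key _ _ _ _ hΔX]
      simp [Matrix.mul_assoc]
    rw [h2, Matrix.trace_zero, sub_zero, Matrix.mul_assoc, Matrix.mul_assoc]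
    exact htraceK
  -- second big trace
  have hsecond : Matrix.trace (((Δcrit * Xpᵀ + Xp * Δcritᵀ) * M)ᵀ *
        ((Δcrit * Xpᵀ + Xp * Δcritᵀ) * M))
      = Matrix.trace (Matrix.diagonal (fun i => Real.sin (θ i) ^ 2) * Ξ) := by
    set A := Δcrit * Xpᵀ * M with hA
    set B := Xp * Δcritᵀ * M with hB
    have hsplit : (Δcrit * Xpᵀ + Xp * Δcritᵀ) * M = A + B := by
      rw [hA, hB, Matrix.add_mul]
    rw [hsplit, Matrix.transpose_add, Matrix.add_mul, Matrix.mul_add, Matrix.mul_add,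
      Matrix.trace_add, Matrix.trace_add, Matrix.trace_add]
    have hAA : Aᵀ * A = 0 := by
      rw [hA]
      simp only [Matrix.transpose_mul, Matrix.transpose_transpose, Matrix.mul_assoc]
      rw [key _ _ _ _ hΔtΔ, hXtM]
      simp only [Matrix.mul_assoc]
      rw [key _ _ _ _ hSC]
      simp
    have hAB : Aᵀ * B = 0 := by
      rw [hA, hB]
      simp only [Matrix.transpose_mul, Matrix.transpose_transpose, Matrix.mul_assoc]
      rw [key _ _ _ _ hΔX]
      simp [Matrix.mul_assoc]
    have hBA : Bᵀ * A = 0 := by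
      rw [hA, hB]
      simp only [Matrix.transpose_mul, Matrix.transpose_transpose, Matrix.mul_assoc]
      rw [key _ _ _ _ htangent]
      simp [Matrix.mul_assoc]
    have hBB : Bᵀ * B = Mᵀ * (Δcrit * (Δcritᵀ * M)) := by
      rw [hB]
      simp only [Matrix.transpose_mul, Matrix.transpose_transpose, Matrix.mul_assoc]
      rw [key _ _ _ _ hXp, Matrix.one_mul]
    rw [hAA, hAB, hBA, hBB, htraceK]
    simp
  -- positivity of trace (sin² * Ξ)
  have hpos : 0 < Matrix.trace (Matrix.diagonal (fun i => Real.sin (θ i) ^ 2) * Ξ) := by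
    have hΞii : ∀ i, Ξ i i = ∑ j, σ j * σ j * (Q j i * Q j i) := by
      intro i
      rw [hΞ, hD, Matrix.diagonal_mul_diagonal, Matrix.mul_assoc, Matrix.mul_apply]
      refine Finset.sum_congr rfl fun j _ => ?_
      rw [Matrix.transpose_apply, Matrix.diagonal_mul]
      ring
    have htr : Matrix.trace (Matrix.diagonal (fun i => Real.sin (θ i) ^ 2) * Ξ)
        = ∑ i, Real.sin (θ i) ^ 2 * Ξ i i := by
      simp [Matrix.trace, Matrix.diag, Matrix.diagonal_mul]
    rw [htr]
    have hterm_nonneg : ∀ i ∈ Finset.univ, 0 ≤ Real.sin (θ i) ^ 2 * Ξ i i := by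
      intro i _
      apply mul_nonneg (sq_nonneg _)
      rw [hΞii]
      apply Finset.sum_nonneg
      intro j _
      exact mul_nonneg (mul_self_nonneg _) (mul_self_nonneg _)
    have hcol : ∑ j, Q j i0 * Q j i0 = 1 := by
      have := congrFun (congrFun hQ i0) i0
      simpa [Matrix.mul_apply, Matrix.one_apply] using this
    have hi0term : 0 < Real.sin (θ i0) ^ 2 * Ξ i0 i0 := by
      rw [hi0, Real.sin_pi_div_two, one_pow, one_mul, hΞii]
      have hle : σmin * σmin * 1 ≤ ∑ j, σ j * σ j * (Q j i0 * Q j i0) := by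
        rw [← hcol, Finset.mul_sum]
        apply Finset.sum_le_sum
        intro j _
        have h1 := hσ j
        have h2 := mul_self_nonneg (Q j i0)
        have h3 : σmin * σmin ≤ σ j * σ j :=
          mul_le_mul h1 h1 hσmin.le (le_trans hσmin.le h1)
        exact mul_le_mul_of_nonneg_right h3 h2
      nlinarith
    exact Finset.sum_pos' hterm_nonneg ⟨i0, Finset.mem_univ i0, hi0term⟩
  refine ⟨htangent, ?_, ?_⟩
  · rw [hfirst, hsecond]; ring
  · rw [hfirst, hsecond]; linarith
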